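/- Let u and v be two c-bounded t-spread monomials of degree d in n variables, and write uv = x_{i_1} x_{i_2} ⋯ x_{i_{2d}} with i_1 ≤ i_2 ≤ ... ≤ i_{2d}. Then the sorted pair v' = x_{i_1} x_{i_3} ⋯ x_{i_{2d-1}} and u' = x_{i_2} x_{i_4} ⋯ x_{i_{2d}} are again c-bounded t-spread monomials of degree d. In other words, the set of generators of the c-bounded t-spread Veronese ideal I_{c,(n,d,t)} is a sortable set. -/

import Mathlib

/-- A list (representing a weakly increasing multiset) is `t`-spread if
successive entries differ by at least `t`. -/
def TSpread (t : ℕ) (A : List ℕ) : Prop :=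
  A.Chain' (fun a b => a + t ≤ b)

/-- A block (for the parameter `t`) is a nonempty run whose successive
differences are exactly `t`. -/
def IsBlock (t : ℕ) (B : List ℕ) : Prop :=
  B ≠ [] ∧ B.Chain' (fun a b => b = a + t)

/-- `Bs` is the decomposition of `A` into maximal blocks. -/
def IsBlockDecomp (t : ℕ) (A : List ℕ) (Bs : List (List ℕ)) : Prop :=
  A = Bs.flatten ∧ (∀ B ∈ Bs, IsBlock t B) ∧
    Bs.Chain' (fun B C => ∀ x ∈ B.getLast?, ∀ y ∈ C.head?, x + t < y)

/-- `A` is `c`-bounded: every block of its (unique) maximal block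
decomposition has size at most `c`. -/
def CBounded (c t : ℕ) (A : List ℕ) : Prop :=
  ∀ Bs, IsBlockDecomp t A Bs → ∀ B ∈ Bs, B.length ≤ c

/-- The set of (sorted index lists of) minimal monomial generators of the
`c`-bounded `t`-spread Veronese ideal `I_{c,(n,d,t)}`. -/
def Gen (c n d t : ℕ) : Set (List ℕ) :=
  {A | A.length = d ∧ TSpread t A ∧ CBounded c t A ∧ ∀ i ∈ A, 1 ≤ i ∧ i ≤ n}


/-- The alternating extraction: `alt true` takes the entries at positions
`1,3,5,…` (1-based), `alt false` those at positions `2,4,6,…`. -/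
def alt : Bool → List ℕ → List ℕ
  | _, [] => []
  | true, a :: l => a :: alt false l
  | false, _ :: l => alt true l

private theorem List.chain'_nil {α : Type*} {R : α → α → Prop} : List.Chain' R [] :=
  List.isChain_nil

private theorem List.chain'_singleton {α : Type*} {R : α → α → Prop} (a : α) :
    List.Chain' R [a] :=
  List.isChain_singleton a

private theorem List.chain'_cons {α : Type*} {R : α → α → Prop} {a b : α} {l : List α} :
    List.Chain' R (a :: b :: l) ↔ R a b ∧ List.Chain' R (b :: l) :=
  List.isChain_cons_cons

private theorem List.chain'_cons' {α : Type*} {R : α → α → Prop} {x : α} {l : List α} :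
    List.Chain' R (x :: l) ↔ (∀ y ∈ l.head?, R x y) ∧ List.Chain' R l :=
  List.isChain_cons

private theorem List.chain'_iff_pairwise {α : Type*} {R : α → α → Prop} [IsTrans α R]
    {l : List α} : List.Chain' R l ↔ List.Pairwise R l := by
  haveI : Trans R R R := ⟨fun h1 h2 => _root_.trans h1 h2⟩
  exact List.isChain_iff_pairwise

private theorem List.Chain'.imp {α : Type*} {R S : α → α → Prop}
    (H : ∀ a b, R a b → S a b) {l : List α} (p : List.Chain' R l) : List.Chain' S l :=
  List.IsChain.imp (fun a b h => H a b h) p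

private theorem List.Chain'.infix {α : Type*} {R : α → α → Prop} {l l₁ : List α}
    (h : List.Chain' R l) (h' : l₁ <:+: l) : List.Chain' R l₁ :=
  List.IsChain.infix h h'

private theorem List.Chain'.take {α : Type*} {R : α → α → Prop} {l : List α}
    (h : List.Chain' R l) (n : ℕ) : List.Chain' R (l.take n) :=
  List.IsChain.take h n

private theorem List.Chain'.tail {α : Type*} {R : α → α → Prop} {l : List α}
    (h : List.Chain' R l) : List.Chain' R l.tail :=
  List.IsChain.tail h

private lemma getLast?_cons_ne (a : ℕ) {l : List ℕ} (h : l ≠ []) :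
    (a :: l).getLast? = l.getLast? := by
  cases l with
  | nil => exact absurd rfl h
  | cons b l => exact List.getLast?_cons_cons

private lemma exists_getLast? {l : List ℕ} (h : l ≠ []) : ∃ y, l.getLast? = some y :=
  ⟨l.getLast h, List.getLast?_eq_getLast h⟩

private lemma exists_head? {l : List ℕ} (h : l ≠ []) : ∃ x, l.head? = some x :=
  ⟨l.head h, List.head?_eq_head h⟩

private lemma chain'_of_pair (R : ℕ → ℕ → Prop) :
    ∀ l : List ℕ, (∀ x y, [x, y] <:+: l → R x y) → l.Chain' R
  | [], _ => List.chain'_nil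
  | [_], _ => List.chain'_singleton _
  | a :: b :: l, h => by
    rw [List.chain'_cons]
    exact ⟨h a b ⟨[], l, by simp⟩,
      chain'_of_pair R (b :: l) fun x y hxy => h x y (List.infix_cons hxy)⟩

private lemma chain_lb (t : ℕ) :
    ∀ l : List ℕ, l.Chain' (fun a b => a + t ≤ b) → ∀ x y, l.head? = some x →
      l.getLast? = some y → x + (l.length - 1) * t ≤ y
  | [], _, x, y, hx, _ => by simp at hx
  | [a], _, x, y, hx, hy => by simp at hx hy ⊢; omega
  | a :: b :: l, h, x, y, hx, hy => by
    rw [List.chain'_cons] at h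
    rw [List.getLast?_cons_cons] at hy
    have ih := chain_lb t (b :: l) h.2 b y rfl hy
    have hx' : a = x := by simpa using hx
    have h1 : (a :: b :: l).length - 1 = ((b :: l).length - 1) + 1 := by simp
    rw [h1, add_mul, one_mul]
    omega

private lemma chain_exact (t : ℕ) :
    ∀ l : List ℕ, l.Chain' (fun a b => b = a + t) → ∀ x y, l.head? = some x →
      l.getLast? = some y → y = x + (l.length - 1) * t
  | [], _, x, y, hx, _ => by simp at hx
  | [a], _, x, y, hx, hy => by simp at hx hy ⊢; omega
  | a :: b :: l, h, x, y, hx, hy => by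
    rw [List.chain'_cons] at h
    rw [List.getLast?_cons_cons] at hy
    have ih := chain_exact t (b :: l) h.2 b y rfl hy
    have hx' : a = x := by simpa using hx
    have h1 : (a :: b :: l).length - 1 = ((b :: l).length - 1) + 1 := by simp
    rw [h1, add_mul, one_mul]
    omega

private lemma chain_squeeze (t : ℕ) :
    ∀ l : List ℕ, l.Chain' (fun a b => a + t ≤ b) → ∀ x y, l.head? = some x →
      l.getLast? = some y → y ≤ x + (l.length - 1) * t → l.Chain' (fun a b => b = a + t)
  | [], _, _, _, _, _, _ => List.chain'_nil
  | [_], _, _, _, _, _, _ => List.chain'_singleton _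
  | a :: b :: l, h, x, y, hx, hy, hb => by
    rw [List.chain'_cons] at h ⊢
    rw [List.getLast?_cons_cons] at hy
    have lb := chain_lb t (b :: l) h.2 b y rfl hy
    have hx' : a = x := by simpa using hx
    have h1 : (a :: b :: l).length - 1 = ((b :: l).length - 1) + 1 := by simp
    rw [h1, add_mul, one_mul] at hb
    have hab : b = a + t := by omega
    exact ⟨hab, chain_squeeze t (b :: l) h.2 b y rfl hy (by omega)⟩

private lemma sorted_head_le {l : List ℕ} (h : l.Pairwise (· ≤ ·)) {x : ℕ} (hx : x ∈ l)
    {a : ℕ} (ha : l.head? = some a) : a ≤ x := by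
  cases l with
  | nil => simp at hx
  | cons b l =>
    have hb : b = a := Option.some.inj ha
    subst hb
    rcases List.mem_cons.mp hx with rfl | hx
    · exact le_refl _
    · exact (List.pairwise_cons.mp h).1 x hx

private lemma sorted_le_last : ∀ (l : List ℕ), l.Pairwise (· ≤ ·) → ∀ x ∈ l,
    ∀ y, l.getLast? = some y → x ≤ y
  | [], _, x, hx, _, _ => by simp at hx
  | [a], _, x, hx, y, hy => by simp at hx hy; omega
  | a :: b :: l, h, x, hx, y, hy => by
    rw [List.getLast?_cons_cons] at hy
    have h' := (List.pairwise_cons.mp h).2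
    have ih := sorted_le_last (b :: l) h'
    rcases List.mem_cons.mp hx with rfl | hx
    · exact le_trans ((List.pairwise_cons.mp h).1 b (List.mem_cons_self))
        (ih b (List.mem_cons_self) y hy)
    · exact ih x hx y hy

private lemma alt_length : ∀ l : List ℕ,
    (alt true l).length = (l.length + 1) / 2 ∧ (alt false l).length = l.length / 2
  | [] => by simp [alt]
  | a :: l => by
    obtain ⟨h1, h2⟩ := alt_length l
    simp only [alt, List.length_cons]
    exact ⟨by rw [h2]; omega, by rw [h1]⟩

private lemma mem_alt : ∀ (b : Bool) (l : List ℕ) (x : ℕ), x ∈ alt b l → x ∈ l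
  | _, [], x, h => by simp [alt] at h
  | true, a :: l, x, h => by
    simp only [alt, List.mem_cons] at h ⊢
    rcases h with rfl | h
    · exact Or.inl rfl
    · exact Or.inr (mem_alt false l x h)
  | false, a :: l, x, h => by
    simp only [alt] at h
    exact List.mem_cons_of_mem a (mem_alt true l x h)

private lemma alt_prefix : ∀ l : List ℕ,
    (∀ B, B ≠ [] → B <+: alt true l →
      ∃ S, S <+: l ∧ S.length = 2 * B.length - 1 ∧ S.head? = B.head? ∧
        S.getLast? = B.getLast?) ∧
    (∀ B, B ≠ [] → B <+: alt false l →
      ∃ S, S <+: l ∧ S ≠ [] ∧ S.length = 2 * B.length ∧ S.getLast? = B.getLast?)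
  | [] => by
    constructor <;> intro B hB hpre <;>
      exact absurd (List.prefix_nil.mp (by simpa [alt] using hpre)) hB
  | a :: l => by
    obtain ⟨IH1, IH2⟩ := alt_prefix l
    constructor
    · intro B hB hpre
      simp only [alt] at hpre
      cases B with
      | nil => exact absurd rfl hB
      | cons x B' =>
        obtain ⟨rfl, hpre'⟩ := List.cons_prefix_cons.mp hpre
        by_cases hB' : B' = []
        · subst hB'
          exact ⟨[x], List.cons_prefix_cons.mpr ⟨rfl, List.nil_prefix⟩, by simp, rfl, rfl⟩
        · obtain ⟨S', hS'pre, hS'ne, hS'len, hS'last⟩ := IH2 B' hB' hpre'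
          refine ⟨x :: S', List.cons_prefix_cons.mpr ⟨rfl, hS'pre⟩, ?_, rfl, ?_⟩
          · simp only [List.length_cons, hS'len]
            have := List.length_pos_iff.mpr hB'
            omega
          · rw [getLast?_cons_ne x hS'ne, getLast?_cons_ne x hB']
            exact hS'last
    · intro B hB hpre
      simp only [alt] at hpre
      obtain ⟨S', hS'pre, hS'len, hS'head, hS'last⟩ := IH1 B hB hpre
      have hS'ne : S' ≠ [] := by
        intro h
        subst h
        cases B with
        | nil => exact hB rfl
        | cons x B' => simp at hS'head
      have hBpos : 0 < B.length := List.length_pos_iff.mpr hB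
      refine ⟨a :: S', List.cons_prefix_cons.mpr ⟨rfl, hS'pre⟩, by simp, ?_, ?_⟩
      · simp only [List.length_cons, hS'len]; omega
      · rw [getLast?_cons_ne a hS'ne]; exact hS'last

private lemma alt_infix : ∀ (l : List ℕ) (b : Bool) (B : List ℕ), B ≠ [] → B <:+: alt b l →
    ∃ S, S <:+: l ∧ S.length = 2 * B.length - 1 ∧ S.head? = B.head? ∧
      S.getLast? = B.getLast?
  | [], b, B, hB, h => by
    exfalso; apply hB
    cases b <;> simpa [alt] using List.infix_nil.mp (by simpa [alt] using h)
  | a :: l, false, B, hB, h => by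
    simp only [alt] at h
    obtain ⟨S, hS, h1, h2, h3⟩ := alt_infix l true B hB h
    exact ⟨S, List.infix_cons hS, h1, h2, h3⟩
  | a :: l, true, B, hB, h => by
    simp only [alt] at h
    rcases List.infix_cons_iff.mp h with hpre | hinf
    · cases B with
      | nil => exact absurd rfl hB
      | cons x B' =>
        obtain ⟨rfl, hpre'⟩ := List.cons_prefix_cons.mp hpre
        by_cases hB' : B' = []
        · subst hB'
          exact ⟨[x], (List.cons_prefix_cons.mpr ⟨rfl, List.nil_prefix⟩).isInfix,
            by simp, rfl, rfl⟩
        · obtain ⟨S', hS'pre, hS'ne, hS'len, hS'last⟩ := (alt_prefix l).2 B' hB' hpre'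
          refine ⟨x :: S', (List.cons_prefix_cons.mpr ⟨rfl, hS'pre⟩).isInfix, ?_, rfl, ?_⟩
          · simp only [List.length_cons, hS'len]
            have := List.length_pos_iff.mpr hB'
            omega
          · rw [getLast?_cons_ne x hS'ne, getLast?_cons_ne x hB']
            exact hS'last
    · obtain ⟨S, hS, h1, h2, h3⟩ := alt_infix l false B hB hinf
      exact ⟨S, List.infix_cons hS, h1, h2, h3⟩

private def Iv (lo hi : ℕ) : ℕ → Bool := fun y => decide (lo ≤ y) && decide (y ≤ hi)

private lemma Iv_eq {lo hi y : ℕ} : Iv lo hi y = true ↔ lo ≤ y ∧ y ≤ hi := by simp [Iv]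

private lemma tspread_sorted {t : ℕ} {u : List ℕ} (h : TSpread t u) : u.Pairwise (· ≤ ·) :=
  List.chain'_iff_pairwise.mp (List.Chain'.imp (fun a b hab => by omega) h)

private lemma tspread_pairwise {t : ℕ} {u : List ℕ} (h : TSpread t u) :
    u.Pairwise (fun a b => a + t ≤ b) := by
  have : IsTrans ℕ (fun a b => a + t ≤ b) := ⟨fun a b c h1 h2 => by omega⟩
  exact List.chain'_iff_pairwise.mp h

private lemma filter_prefix_of_lb (lo hi : ℕ) :
    ∀ l : List ℕ, l.Pairwise (· ≤ ·) → (∀ x ∈ l, lo ≤ x) → l.filter (Iv lo hi) <+: l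
  | [], _, _ => by simp
  | b :: l, hs, hlb => by
    obtain ⟨hb, hs'⟩ := List.pairwise_cons.mp hs
    by_cases hbh : b ≤ hi
    · rw [List.filter_cons_of_pos (Iv_eq.mpr ⟨hlb b (by simp), hbh⟩)]
      exact List.cons_prefix_cons.mpr
        ⟨rfl, filter_prefix_of_lb lo hi l hs' (fun x hx => hlb x (by simp [hx]))⟩
    · rw [List.filter_cons_of_neg (fun h => hbh (Iv_eq.mp h).2)]
      rw [List.filter_eq_nil_iff.mpr (fun x hx h => hbh (le_trans (hb x hx) (Iv_eq.mp h).2))]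
      exact List.nil_prefix

private lemma filter_sorted_infix (lo hi : ℕ) :
    ∀ l : List ℕ, l.Pairwise (· ≤ ·) → l.filter (Iv lo hi) <:+: l
  | [], _ => by simp
  | a :: l, hs => by
    obtain ⟨ha, hs'⟩ := List.pairwise_cons.mp hs
    by_cases h1 : lo ≤ a
    · by_cases h2 : a ≤ hi
      · rw [List.filter_cons_of_pos (Iv_eq.mpr ⟨h1, h2⟩)]
        exact (List.cons_prefix_cons.mpr
          ⟨rfl, filter_prefix_of_lb lo hi l hs' (fun x hx => le_trans h1 (ha x hx))⟩).isInfix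
      · rw [List.filter_cons_of_neg (fun h => h2 (Iv_eq.mp h).2)]
        rw [List.filter_eq_nil_iff.mpr (fun x hx h => h2 (le_trans (ha x hx) (Iv_eq.mp h).2))]
        exact List.nil_infix
    · rw [List.filter_cons_of_neg (fun h => h1 (Iv_eq.mp h).1)]
      exact List.infix_cons (filter_sorted_infix lo hi l hs')

private lemma window_one {t : ℕ} {u : List ℕ} (h : TSpread t u) {lo hi : ℕ}
    (hlt : hi < lo + t) : u.countP (Iv lo hi) ≤ 1 := by
  by_contra hc
  push_neg at hc
  have h2 : 2 ≤ (u.filter (Iv lo hi)).length := by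
    rw [← List.countP_eq_length_filter]; omega
  obtain ⟨y1, y2, L, hFeq⟩ : ∃ y1 y2 L, u.filter (Iv lo hi) = y1 :: y2 :: L := by
    cases hF : u.filter (Iv lo hi) with
    | nil => rw [hF] at h2; simp at h2
    | cons y1 T =>
      cases T with
      | nil => rw [hF] at h2; simp at h2
      | cons y2 L => exact ⟨y1, y2, L, rfl⟩
  have hpw := (tspread_pairwise h).sublist (List.filter_sublist (p := Iv lo hi) (l := u))
  rw [hFeq] at hpw
  have h12 : y1 + t ≤ y2 := (List.pairwise_cons.mp hpw).1 y2 (by simp)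
  have hy1 : lo ≤ y1 ∧ y1 ≤ hi := Iv_eq.mp (List.of_mem_filter
    (show y1 ∈ u.filter (Iv lo hi) from by rw [hFeq]; simp))
  have hy2 : lo ≤ y2 ∧ y2 ≤ hi := Iv_eq.mp (List.of_mem_filter
    (show y2 ∈ u.filter (Iv lo hi) from by rw [hFeq]; simp))
  omega

private lemma tspread_decomp (t : ℕ) :
    ∀ A : List ℕ, TSpread t A → A ≠ [] →
      ∃ B₀ Bs, IsBlockDecomp t A (B₀ :: Bs) ∧ B₀.head? = A.head? ∧
        (∀ R, R ≠ [] → R <:+: A → R.Chain' (fun a b => b = a + t) →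
          ∃ B ∈ B₀ :: Bs, R.length ≤ B.length) ∧
        (∀ R, R <+: A → R.Chain' (fun a b => b = a + t) → R.length ≤ B₀.length)
  | [], _, h => absurd rfl h
  | [a], _, _ => by
    refine ⟨[a], [], ⟨by simp, ?_, List.isChain_singleton _⟩, rfl, ?_, ?_⟩
    · intro B hB
      simp at hB
      subst hB
      exact ⟨by simp, List.chain'_singleton a⟩
    · intro R _ hinf _
      exact ⟨[a], by simp, by simpa using hinf.sublist.length_le⟩
    · intro R hpre _
      simpa using hpre.sublist.length_le
  | a :: b :: l, hsp, _ => by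
    have hsp0 : (a :: b :: l).Chain' (fun x y => x + t ≤ y) := hsp
    rw [List.chain'_cons] at hsp0
    have hab : a + t ≤ b := hsp0.1
    have hsp' : TSpread t (b :: l) := hsp0.2
    obtain ⟨B₀, Bs, ⟨hflat, hblocks, hchain⟩, hhead, hrun, hprefbd⟩ :=
      tspread_decomp t (b :: l) hsp' (by simp)
    have hB₀ne : B₀ ≠ [] := (hblocks B₀ (by simp)).1
    by_cases hm : b = a + t
    · have hnewpref : ∀ R, R <+: a :: b :: l → R.Chain' (fun x y => y = x + t) →
          R.length ≤ (a :: B₀).length := by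
        intro R hpre hch
        cases R with
        | nil => simp
        | cons r R' =>
          obtain ⟨rfl, hpre'⟩ := List.cons_prefix_cons.mp hpre
          have h' : R'.length ≤ B₀.length := hprefbd R' hpre' hch.tail
          simpa using Nat.succ_le_succ h'
      refine ⟨a :: B₀, Bs, ⟨?_, ?_, ?_⟩, rfl, ?_, hnewpref⟩
      · simp only [List.flatten_cons] at hflat ⊢
        rw [List.cons_append, ← hflat]
      · intro B hB
        rcases List.mem_cons.mp hB with rfl | hB
        · refine ⟨by simp, ?_⟩
          rw [List.chain'_cons']
          refine ⟨?_, (hblocks B₀ (by simp)).2⟩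
          intro y hy
          rw [hhead] at hy
          simp at hy
          omega
        · exact hblocks B (List.mem_cons_of_mem B₀ hB)
      · cases Bs with
        | nil => exact List.chain'_singleton _
        | cons C Cs =>
          rw [List.chain'_cons] at hchain ⊢
          refine ⟨?_, hchain.2⟩
          intro x hx y hy
          apply hchain.1 x ?_ y hy
          rwa [getLast?_cons_ne a hB₀ne] at hx
      · intro R hRne hRinf hRch
        rcases List.infix_cons_iff.mp hRinf with hpre | hinf
        · exact ⟨a :: B₀, by simp, hnewpref R hpre hRch⟩
        · obtain ⟨B, hBmem, hBle⟩ := hrun R hRne hinf hRch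
          rcases List.mem_cons.mp hBmem with rfl | hmem
          · exact ⟨a :: B, by simp, le_trans hBle (by simp)⟩
          · exact ⟨B, by simp [hmem], hBle⟩
    · have hlt : a + t < b := lt_of_le_of_ne hab (fun h => hm h.symm)
      have hnewpref : ∀ R, R <+: a :: b :: l → R.Chain' (fun x y => y = x + t) →
          R.length ≤ 1 := by
        intro R hpre hch
        cases R with
        | nil => simp
        | cons r R' =>
          obtain ⟨rfl, hpre'⟩ := List.cons_prefix_cons.mp hpre
          cases R' with
          | nil => simp
          | cons s R'' =>
            obtain ⟨rfl, _⟩ := List.cons_prefix_cons.mp hpre'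
            exact absurd (List.chain'_cons.mp hch).1 hm
      refine ⟨[a], B₀ :: Bs, ⟨?_, ?_, ?_⟩, rfl, ?_, by simpa using hnewpref⟩
      · simp only [List.flatten_cons] at hflat ⊢
        rw [← hflat]
        rfl
      · intro B hB
        rcases List.mem_cons.mp hB with rfl | hB
        · exact ⟨by simp, List.chain'_singleton a⟩
        · exact hblocks B hB
      · rw [List.chain'_cons]
        refine ⟨?_, hchain⟩
        intro x hx y hy
        simp at hx
        rw [hhead] at hy
        simp at hy
        omega
      · intro R hRne hRinf hRch
        rcases List.infix_cons_iff.mp hRinf with hpre | hinf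
        · exact ⟨[a], by simp, by simpa using hnewpref R hpre hRch⟩
        · obtain ⟨B, hBmem, hBle⟩ := hrun R hRne hinf hRch
          exact ⟨B, List.mem_cons_of_mem _ hBmem, hBle⟩


private lemma window_c {c t : ℕ} {u : List ℕ} (hsp : TSpread t u) (hcb : CBounded c t u)
    (lo : ℕ) : u.countP (Iv lo (lo + c * t)) ≤ c := by
  by_contra hc
  push_neg at hc
  have hlen : c + 1 ≤ (u.filter (Iv lo (lo + c * t))).length := by
    rw [← List.countP_eq_length_filter]; omega
  have hFinf : u.filter (Iv lo (lo + c * t)) <:+: u :=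
    filter_sorted_infix lo (lo + c * t) u (tspread_sorted hsp)
  set G := (u.filter (Iv lo (lo + c * t))).take (c + 1) with hGdef
  have hGpre : G <+: u.filter (Iv lo (lo + c * t)) := List.take_prefix _ _
  have hGinf : G <:+: u := hGpre.isInfix.trans hFinf
  have hGlen : G.length = c + 1 := by rw [hGdef, List.length_take]; omega
  have hGne : G ≠ [] := by intro h; rw [h] at hGlen; simp at hGlen
  have hGchain : G.Chain' (fun a b => a + t ≤ b) := List.Chain'.infix hsp hGinf
  obtain ⟨x, hx⟩ := exists_head? hGne
  obtain ⟨y, hy⟩ := exists_getLast? hGne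
  have hGbd : ∀ z ∈ G, lo ≤ z ∧ z ≤ lo + c * t := by
    intro z hz
    exact Iv_eq.mp (List.of_mem_filter (hGpre.subset hz))
  have hxb := hGbd x (List.mem_of_mem_head? (by rw [hx]; simp))
  have hyb := hGbd y (List.mem_of_getLast? hy)
  have hsq : y ≤ x + (G.length - 1) * t := by
    rw [hGlen]
    have h5 : (c + 1 - 1) * t = c * t := by norm_num
    omega
  have hGex : G.Chain' (fun a b => b = a + t) := chain_squeeze t G hGchain x y hx hy hsq
  have hune : u ≠ [] := by
    intro h
    rw [h] at hGinf
    exact hGne (List.infix_nil.mp hGinf)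
  obtain ⟨B₀, Bs, hdec, _, hrunbd, _⟩ := tspread_decomp t u hsp hune
  obtain ⟨B, hBmem, hBle⟩ := hrunbd G hGne hGinf hGex
  have := hcb (B₀ :: Bs) hdec B hBmem
  omega


/-- The minimal generating set of the `c`-bounded `t`-spread
Veronese ideal is sortable: if `u, v` are `c`-bounded `t`-spread (index lists
of) monomials of degree `d` in `[n]`, and `w = (i₁ ≤ i₂ ≤ … ≤ i_{2d})` is the
weakly increasing arrangement of the combined multiset of `u` and `v`, then
`v' = (i₁, i₃, …, i_{2d-1})` and `u' = (i₂, i₄, …, i_{2d})` are again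
`c`-bounded `t`-spread of degree `d`. -/
theorem stmt_1 (c n d t : ℕ) (u v : List ℕ)
    (hu : u ∈ Gen c n d t) (hv : v ∈ Gen c n d t)
    (w : List ℕ) (hw : (↑w : Multiset ℕ) = (↑u : Multiset ℕ) + (↑v : Multiset ℕ))
    (hws : w.Pairwise (· ≤ ·)) :
    alt true w ∈ Gen c n d t ∧ alt false w ∈ Gen c n d t := by
  obtain ⟨hud, hut, huc, hub⟩ := hu
  obtain ⟨hvd, hvt, hvc, hvb⟩ := hv
  have hperm : w.Perm (u ++ v) := Multiset.coe_eq_coe.mp (hw.trans (Multiset.coe_add u v))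
  have hwlen : w.length = 2 * d := by
    have h := hperm.length_eq
    rw [List.length_append, hud, hvd] at h
    omega
  have hcount : ∀ p : ℕ → Bool, w.countP p = u.countP p + v.countP p := by
    intro p
    rw [hperm.countP_eq, List.countP_append]
  have hWsub : ∀ z ∈ w, 1 ≤ z ∧ z ≤ n := by
    intro z hz
    rcases List.mem_append.mp (hperm.mem_iff.mp hz) with h | h
    · exact hub z h
    · exact hvb z h
  have keyC : ∀ lo, w.countP (Iv lo (lo + c * t)) ≤ 2 * c := by
    intro lo
    have h1 := window_c hut huc lo
    have h2 := window_c hvt hvc lo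
    rw [hcount]
    omega
  have key1 : ∀ lo hi, hi < lo + t → w.countP (Iv lo hi) ≤ 2 := by
    intro lo hi h
    have h1 := window_one hut h
    have h2 := window_one hvt h
    rw [hcount]
    omega
  have main : ∀ b : Bool, TSpread t (alt b w) ∧ CBounded c t (alt b w) := by
    intro b
    constructor
    · show (alt b w).Chain' (fun x y => x + t ≤ y)
      apply chain'_of_pair
      intro x y hxy
      obtain ⟨S, hSinf, hSlen, hShead, hSlast⟩ := alt_infix w b [x, y] (by simp) hxy
      have hSsorted : S.Pairwise (· ≤ ·) := hws.sublist hSinf.sublist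
      by_contra hcon
      have hxmem : x ∈ S := List.mem_of_mem_head? (by rw [hShead]; simp)
      have hxy' : x ≤ y := sorted_le_last S hSsorted x hxmem y hSlast
      have hall : ∀ z ∈ S, Iv x y z = true := by
        intro z hz
        exact Iv_eq.mpr ⟨sorted_head_le hSsorted hz hShead,
          sorted_le_last S hSsorted z hz y hSlast⟩
      have hS3 : S.length = 3 := by simpa using hSlen
      have hcnt : S.countP (Iv x y) = S.length := List.countP_eq_length.mpr hall
      have hle := List.Sublist.countP_le (p := Iv x y) hSinf.sublist
      have hk := key1 x y (by omega)
      omega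
    · intro Bs hBs B hBmem
      obtain ⟨hflat, hblocks, _⟩ := hBs
      have hBinf : B <:+: alt b w := hflat ▸ List.infix_of_mem_flatten hBmem
      obtain ⟨hBne, hBch⟩ := hblocks B hBmem
      by_contra hcgt
      push_neg at hcgt
      set G := B.take (c + 1) with hGdef
      have hGlen : G.length = c + 1 := by rw [hGdef, List.length_take]; omega
      have hGne : G ≠ [] := by intro h; rw [h] at hGlen; simp at hGlen
      have hGinf : G <:+: alt b w := (List.take_prefix _ _).isInfix.trans hBinf
      have hGch : G.Chain' (fun a b => b = a + t) := hBch.take _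
      obtain ⟨S, hSinf, hSlen, hShead, hSlast⟩ := alt_infix w b G hGne hGinf
      obtain ⟨x, hx⟩ := exists_head? hGne
      obtain ⟨y, hy⟩ := exists_getLast? hGne
      have hyval : y = x + c * t := by
        have h := chain_exact t G hGch x y hx hy
        rw [hGlen] at h
        simpa using h
      have hSsorted : S.Pairwise (· ≤ ·) := hws.sublist hSinf.sublist
      have hall : ∀ z ∈ S, Iv x (x + c * t) z = true := by
        intro z hz
        refine Iv_eq.mpr ⟨sorted_head_le hSsorted hz (hShead.trans hx), ?_⟩
        have := sorted_le_last S hSsorted z hz y (hSlast.trans hy)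
        omega
      have hcnt : S.countP (Iv x (x + c * t)) = S.length := List.countP_eq_length.mpr hall
      have hle := List.Sublist.countP_le (p := Iv x (x + c * t)) hSinf.sublist
      have hkc := keyC x
      rw [hGlen] at hSlen
      omega
  refine ⟨⟨?_, (main true).1, (main true).2, ?_⟩, ⟨?_, (main false).1, (main false).2, ?_⟩⟩
  · rw [(alt_length w).1, hwlen]; omega
  · intro i hi; exact hWsub i (mem_alt true w i hi)
  · rw [(alt_length w).2, hwlen]; omega
  · intro i hi; exact hWsub i (mem_alt false w i hi)
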